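/- Suppose u : [0,∞) → [0,∞) is C¹ and satisfies u'(t) + m·u(t) + u(t)² ≤ C for all t > 0, with m ≥ 0 and C > 0. Then sup_{t>0} min(t,1)·u(t) ≤ C' for a constant C' depending only on C (independent of u(0)). -/

import Mathlib

/-- Coming down from infinity: if `u : [0,∞) → [0,∞)` is `C¹` and satisfies
`u'(t) + m u(t) + u(t)² ≤ C` for all `t > 0`, with `m ≥ 0` and `C > 0`, then
`sup_{t>0} min(t,1) u(t) ≤ C'` for a constant `C'` depending only on `C`
(in particular independent of `u(0)` and of `m`). -/
theorem coming_down_from_infinity (C : ℝ) (hC : 0 < C) :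
    ∃ C' : ℝ, 0 < C' ∧
      ∀ (m : ℝ), 0 ≤ m →
      ∀ (u u' : ℝ → ℝ),
        (∀ t, 0 ≤ t → 0 ≤ u t) →
        ContinuousOn u (Set.Ici 0) →
        (∀ t, 0 < t → HasDerivAt u (u' t) t) →
        (∀ t, 0 < t → ContinuousAt u' t) →
        (∀ t, 0 < t → u' t + m * u t + (u t) ^ 2 ≤ C) →
        ∀ t, 0 < t → min t 1 * u t ≤ C' := by
  classical
  refine ⟨Real.sqrt (2 * C) + 2, by positivity, ?_⟩
  intro m hm u u' hu0 hucont huderiv _ hineq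
  set K := Real.sqrt (2 * C) with hKdef
  have hK0 : 0 ≤ K := Real.sqrt_nonneg _
  have hKsq : K ^ 2 = 2 * C := Real.sq_sqrt (by linarith)
  -- Key barrier estimate: u s < K + 2/s for all s > 0.
  have key : ∀ s : ℝ, 0 < s → u s < K + 2 / s := by
    by_contra hcon
    push_neg at hcon
    obtain ⟨s₀, hs₀pos, hs₀⟩ := hcon
    -- near 0 the bound holds by continuity of u at 0
    have h0 : ∀ ε > 0, ∃ δ > 0, ∀ x ∈ Set.Ici (0 : ℝ), dist x 0 < δ → dist (u x) (u 0) < ε :=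
      Metric.tendsto_nhdsWithin_nhds.mp (hucont 0 (Set.mem_Ici.mpr le_rfl))
    obtain ⟨δ₀, hδ₀, hδ⟩ := h0 1 one_pos
    have hu00 : 0 ≤ u 0 := hu0 0 le_rfl
    set δ' : ℝ := min δ₀ (2 / (u 0 + 1)) with hδ'def
    have hδ'pos : 0 < δ' := lt_min hδ₀ (by positivity)
    have hsmall : ∀ s, 0 < s → s < δ' → u s < K + 2 / s := by
      intro s hs hsδ
      have h1 : dist (u s) (u 0) < 1 := by
        apply hδ s (le_of_lt hs)
        rw [Real.dist_eq, sub_zero, abs_of_nonneg hs.le]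
        exact lt_of_lt_of_le hsδ (min_le_left _ _)
      have h2 : u s < u 0 + 1 := by
        have := abs_sub_lt_iff.mp (by rwa [Real.dist_eq] at h1)
        linarith [this.1]
      have h3 : s * (u 0 + 1) < 2 := by
        have hs2 : s < 2 / (u 0 + 1) := lt_of_lt_of_le hsδ (min_le_right _ _)
        exact (lt_div_iff₀ (by positivity)).mp hs2
      have h4 : u 0 + 1 < 2 / s := (lt_div_iff₀ hs).mpr (by nlinarith)
      linarith
    -- the "bad" set and its infimum
    set S : Set ℝ := {s : ℝ | 0 < s ∧ K + 2 / s ≤ u s} with hSdef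
    have hS0 : s₀ ∈ S := ⟨hs₀pos, hs₀⟩
    have hSne : S.Nonempty := ⟨s₀, hS0⟩
    have hlb : ∀ s ∈ S, δ' ≤ s := by
      intro s hs
      by_contra hlt
      push_neg at hlt
      exact absurd hs.2 (not_le.mpr (hsmall s hs.1 hlt))
    have hbdd : BddBelow S := ⟨δ', hlb⟩
    set t₁ : ℝ := sInf S with ht₁def
    have ht₁δ : δ' ≤ t₁ := le_csInf hSne hlb
    have ht₁pos : 0 < t₁ := lt_of_lt_of_le hδ'pos ht₁δ
    have ht₁ne : t₁ ≠ 0 := ne_of_gt ht₁pos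
    -- t₁ is in the closure of S
    have ht₁cl : t₁ ∈ closure S := (Real.isGLB_sInf hSne hbdd).mem_closure hSne
    have hNeBot : (nhdsWithin t₁ S).NeBot := mem_closure_iff_nhdsWithin_neBot.mp ht₁cl
    -- continuity of u at t₁
    have hucont₁ : ContinuousAt u t₁ := (huderiv t₁ ht₁pos).continuousAt
    have hvcont : ContinuousAt (fun s : ℝ => K + 2 / s) t₁ := by
      have : ContinuousAt (fun s : ℝ => s⁻¹) t₁ := continuousAt_inv₀ ht₁ne
      simp only [div_eq_mul_inv]
      exact (continuousAt_const.add (this.const_mul 2))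
    -- u t₁ ≥ K + 2/t₁
    have hut : K + 2 / t₁ ≤ u t₁ := by
      have htend : Filter.Tendsto (fun s => u s - (K + 2 / s)) (nhdsWithin t₁ S)
          (nhds (u t₁ - (K + 2 / t₁))) :=
        ((hucont₁.sub hvcont).continuousWithinAt).tendsto
      have hev : ∀ᶠ s in nhdsWithin t₁ S, (0 : ℝ) ≤ u s - (K + 2 / s) := by
        filter_upwards [self_mem_nhdsWithin] with s hs
        linarith [hs.2]
      linarith [ge_of_tendsto htend hev]
    -- derivative of the barrier minus u at t₁
    have hv : HasDerivAt (fun s : ℝ => K + 2 / s) (2 * (-(t₁ ^ 2)⁻¹)) t₁ := by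
      have := ((hasDerivAt_inv ht₁ne).const_mul 2).const_add K
      simpa [div_eq_mul_inv] using this
    have hder : HasDerivAt (fun s : ℝ => K + 2 / s - u s)
        (2 * (-(t₁ ^ 2)⁻¹) - u' t₁) t₁ := hv.sub (huderiv t₁ ht₁pos)
    set D : ℝ := 2 * (-(t₁ ^ 2)⁻¹) - u' t₁ with hDdef
    -- D ≤ 0 by the slope argument from the left
    have hDle : D ≤ 0 := by
      have hslope : Filter.Tendsto (slope (fun s : ℝ => K + 2 / s - u s) t₁)
          (nhdsWithin t₁ {t₁}ᶜ) (nhds D) := hasDerivAt_iff_tendsto_slope.mp hder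
      have hsub : Set.Ioo (0 : ℝ) t₁ ⊆ {t₁}ᶜ := by
        intro x hx
        exact ne_of_lt hx.2
      have hslope' : Filter.Tendsto (slope (fun s : ℝ => K + 2 / s - u s) t₁)
          (nhdsWithin t₁ (Set.Ioo 0 t₁)) (nhds D) :=
        hslope.mono_left (nhdsWithin_mono _ hsub)
      have hcl : t₁ ∈ closure (Set.Ioo (0 : ℝ) t₁) := by
        rw [closure_Ioo (ne_of_lt ht₁pos)]
        exact ⟨ht₁pos.le, le_rfl⟩
      have hNB : (nhdsWithin t₁ (Set.Ioo (0 : ℝ) t₁)).NeBot :=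
        mem_closure_iff_nhdsWithin_neBot.mp hcl
      refine le_of_tendsto hslope' ?_
      filter_upwards [self_mem_nhdsWithin] with s hs
      have hsS : s ∉ S := by
        intro hmem
        exact absurd (csInf_le hbdd hmem) (not_le.mpr hs.2)
      have hus : u s < K + 2 / s := by
        by_contra hle
        push_neg at hle
        exact hsS ⟨hs.1, hle⟩
      have hnum : 0 < (K + 2 / s - u s) - (K + 2 / t₁ - u t₁) := by
        linarith
      have hden : s - t₁ < 0 := by linarith [hs.2]
      rw [slope_def_field]
      rw [div_eq_mul_inv]
      have : ((K + 2 / s - u s) - (K + 2 / t₁ - u t₁)) * (s - t₁)⁻¹ ≤ 0 :=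
        mul_nonpos_of_nonneg_of_nonpos hnum.le (inv_nonpos.mpr hden.le)
      simpa [div_eq_mul_inv] using this
    -- D > 0 from the differential inequality
    have hDpos : 0 < D := by
      have hvpos : 0 < K + 2 / t₁ := by positivity
      have hsq : (K + 2 / t₁) ^ 2 ≤ u t₁ ^ 2 := pow_le_pow_left₀ hvpos.le hut 2
      have hu'le : u' t₁ ≤ C - u t₁ ^ 2 := by
        have h := hineq t₁ ht₁pos
        have hmu : 0 ≤ m * u t₁ := mul_nonneg hm (hu0 t₁ ht₁pos.le)
        linarith
      have hexp : (K + 2 / t₁) ^ 2 = 2 * C + 4 * K / t₁ + 4 * (t₁ ^ 2)⁻¹ := by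
        rw [← hKsq]
        field_simp
        ring
      have h1 : 0 ≤ 4 * K / t₁ := by positivity
      have h2 : 0 < (t₁ ^ 2)⁻¹ := by positivity
      rw [hDdef]
      have : u' t₁ ≤ C - (2 * C + 4 * K / t₁ + 4 * (t₁ ^ 2)⁻¹) := by
        rw [← hexp]; linarith
      linarith
    linarith
  -- conclude
  intro t ht
  have hkey := key t ht
  have hut : 0 ≤ u t := hu0 t ht.le
  rcases le_total t 1 with h | h
  · have hmin : min t 1 = t := min_eq_left h
    rw [hmin]
    have h1 : t * u t ≤ t * (K + 2 / t) := mul_le_mul_of_nonneg_left hkey.le ht.le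
    have h2 : t * (K + 2 / t) = t * K + 2 := by field_simp
    have h3 : t * K ≤ K := by nlinarith
    linarith
  · have hmin : min t 1 = 1 := min_eq_right h
    rw [hmin, one_mul]
    have h1 : 2 / t ≤ 2 := by
      rw [div_le_iff₀ ht]
      nlinarith
    linarith
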